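/- The HOW function lies below the quadratic and only down-weighs outlier-corrupted values: for all x ∈ ℝ, l_{σ,c}(x) ≤ x²/2, with equality if and only if |x| ≤ c. -/

import Mathlib

/-- The hybrid ordinary-Welsch (HOW) function with parameters `σ, c > 0`. -/
noncomputable def how (σ c x : ℝ) : ℝ :=
  if |x| ≤ c then x ^ 2 / 2
  else σ ^ 2 / 2 * (1 - Real.exp ((c ^ 2 - x ^ 2) / σ ^ 2)) + c ^ 2 / 2

/-- The HOW function lies below the quadratic, with equality
exactly on the non-outlier region `|x| ≤ c`. -/
theorem how_le_quadratic (σ c : ℝ) (hσ : 0 < σ) (hc : 0 < c) :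
    ∀ x : ℝ, how σ c x ≤ x ^ 2 / 2 ∧ (how σ c x = x ^ 2 / 2 ↔ |x| ≤ c) := by
  intro x
  unfold how
  by_cases h : |x| ≤ c
  · simp [h]
  · simp only [h, if_neg, iff_false]
    have hσ2 : (0:ℝ) < σ ^ 2 := by positivity
    have hx : c < |x| := not_le.mp h
    have hx2 : c ^ 2 < x ^ 2 := by
      have := sq_abs x
      nlinarith [abs_nonneg x]
    set t := (c ^ 2 - x ^ 2) / σ ^ 2 with ht
    have htneg : t < 0 := div_neg_of_neg_of_pos (by linarith) hσ2
    have hexp : 1 + t < Real.exp t := by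
      have := Real.add_one_lt_exp (x := t) (ne_of_lt htneg)
      linarith
    have key : σ ^ 2 / 2 * (1 - Real.exp t) + c ^ 2 / 2 < x ^ 2 / 2 := by
      have h1 : σ ^ 2 * (1 - Real.exp t) < σ ^ 2 * (-t) := by
        apply mul_lt_mul_of_pos_left _ hσ2
        linarith
      have h2 : σ ^ 2 * (-t) = x ^ 2 - c ^ 2 := by
        rw [ht]; field_simp; ring
      nlinarith
    exact ⟨le_of_lt key, ne_of_lt key⟩
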